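/- Suppose γ is a density operator on D ⊗ E commuting with R^x_a ⊗ I_E for every a ∈ {1,…,n} and x (where {R^x_a}_x are POVMs on D). Then the correlation p^{xy}_{ab} = Tr[γ (R^x_a ⊗ S^y_b)] (for any POVMs {S^y_b}_y on E) is classical, i.e., a convex combination of product correlations: there exist a finite probability distribution (λ_k) and probability vectors (q^x_{a,k})_x, (r^y_{b,k})_y such that p^{xy}_{ab} = Σ_k λ_k q^x_{a,k} r^y_{b,k} for all a,b,x,y. -/

import Mathlib

open Matrix ComplexOrder Kronecker

set_option maxHeartbeats 1600000


open Matrix ComplexOrder Kronecker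

section Stmt18Sqrt

open scoped MatrixOrder

variable {n 𝕜 : Type*} [Fintype n] [DecidableEq n] [RCLike 𝕜]

/-- square root of a positive semidefinite matrix (as in older Mathlib) -/
noncomputable def Matrix.PosSemidef.sqrt {A : Matrix n n 𝕜} (hA : A.PosSemidef) :
    Matrix n n 𝕜 :=
  (hA.1.eigenvectorUnitary : Matrix n n 𝕜) *
    diagonal ((RCLike.ofReal : ℝ → 𝕜) ∘ Real.sqrt ∘ hA.1.eigenvalues) *
    star (hA.1.eigenvectorUnitary : Matrix n n 𝕜)

lemma Matrix.PosSemidef.sqrt_eq_cfcSqrt {A : Matrix n n 𝕜} (hA : A.PosSemidef) :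
    hA.sqrt = CFC.sqrt A := by
  rw [CFC.sqrt_eq_cfc, cfc_nnreal_eq_real _ A, hA.1.cfc_eq]
  simp only [IsHermitian.cfc, Matrix.PosSemidef.sqrt, Real.coe_sqrt, Real.coe_toNNReal',
    Unitary.conjStarAlgAut_apply]
  congr 3
  funext i
  simp [max_eq_left (hA.eigenvalues_nonneg i)]

lemma Matrix.PosSemidef.posSemidef_sqrt {A : Matrix n n 𝕜} (hA : A.PosSemidef) :
    hA.sqrt.PosSemidef := by
  rw [hA.sqrt_eq_cfcSqrt]
  exact (CFC.sqrt_nonneg A).posSemidef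

lemma Matrix.PosSemidef.sqrt_mul_self {A : Matrix n n 𝕜} (hA : A.PosSemidef) :
    hA.sqrt * hA.sqrt = A := by
  rw [hA.sqrt_eq_cfcSqrt]
  exact CFC.sqrt_mul_sqrt_self A hA.nonneg

lemma Matrix.PosSemidef.eq_sqrt_of_sq_eq {A B : Matrix n n 𝕜} (hA : A.PosSemidef)
    (hB : B.PosSemidef) (hAB : A ^ 2 = B) : A = hB.sqrt := by
  rw [hB.sqrt_eq_cfcSqrt]
  exact (CFC.sqrt_unique (a := B) (b := A) (by rw [← sq]; exact hAB) hA.nonneg).symm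

lemma Matrix.posSemidef_iff_eq_transpose_mul_self {A : Matrix n n 𝕜} :
    A.PosSemidef ↔ ∃ B : Matrix n n 𝕜, A = Bᴴ * B := by
  constructor
  · intro hA
    exact ⟨hA.sqrt, by rw [hA.posSemidef_sqrt.1.eq, hA.sqrt_mul_self]⟩
  · rintro ⟨B, rfl⟩
    exact Matrix.posSemidef_conjTranspose_mul_self B

end Stmt18Sqrt

section Stmt18Aux

variable {d e X : Type*} [Fintype d] [DecidableEq d] [Fintype e] [DecidableEq e] [Fintype X]

lemma stmt18_tracePSD {P : Matrix d d ℂ} (hP : P.PosSemidef) : 0 ≤ P.trace := by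
  rw [Matrix.trace]
  refine Finset.sum_nonneg fun i _ => ?_
  have := hP.dotProduct_mulVec_nonneg (Pi.single i 1)
  simpa [dotProduct, Matrix.mulVec, Pi.single_apply, Matrix.diag] using this

lemma stmt18_traceMulNonneg {M N : Matrix d d ℂ} (hM : M.PosSemidef) (hN : N.PosSemidef) :
    0 ≤ (M * N).trace := by
  obtain ⟨B, rfl⟩ := Matrix.posSemidef_iff_eq_transpose_mul_self.mp hM
  rw [← Matrix.trace_mul_cycle]
  exact stmt18_tracePSD (hN.mul_mul_conjTranspose_same B)

omit [Fintype d] [Fintype e] [DecidableEq d] [DecidableEq e] in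
lemma stmt18_kronCT (A : Matrix d d ℂ) (B : Matrix e e ℂ) : (A ⊗ₖ B)ᴴ = Aᴴ ⊗ₖ Bᴴ := by
  ext ⟨i, j⟩ ⟨k, l⟩
  simp [Matrix.conjTranspose_apply, Matrix.kroneckerMap_apply, mul_comm]

lemma stmt18_kronPSD {A : Matrix d d ℂ} {B : Matrix e e ℂ} (hA : A.PosSemidef)
    (hB : B.PosSemidef) : (A ⊗ₖ B).PosSemidef := by
  obtain ⟨C, rfl⟩ := Matrix.posSemidef_iff_eq_transpose_mul_self.mp hA
  obtain ⟨D, rfl⟩ := Matrix.posSemidef_iff_eq_transpose_mul_self.mp hB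
  have h : (Cᴴ * C) ⊗ₖ (Dᴴ * D) = (C ⊗ₖ D)ᴴ * (C ⊗ₖ D) := by
    rw [stmt18_kronCT, Matrix.mul_kronecker_mul]
  rw [h]
  exact Matrix.posSemidef_conjTranspose_mul_self _

omit [Fintype X] [DecidableEq d] [DecidableEq e] in
lemma stmt18_kronSum {Y : Type*} [Fintype Y] (S : Y → Matrix e e ℂ) (A : Matrix d d ℂ) :
    A ⊗ₖ (∑ y, S y) = ∑ y, A ⊗ₖ S y := by
  ext ⟨i, j⟩ ⟨k, l⟩
  simp [Matrix.kroneckerMap_apply, Finset.mul_sum, Matrix.sum_apply]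

omit [DecidableEq d] [DecidableEq e] in
lemma stmt18_sumKron (R : X → Matrix d d ℂ) (B : Matrix e e ℂ) :
    (∑ x, R x) ⊗ₖ B = ∑ x, R x ⊗ₖ B := by
  ext ⟨i, j⟩ ⟨k, l⟩
  simp [Matrix.kroneckerMap_apply, Finset.sum_mul, Matrix.sum_apply]

lemma stmt18_commuteSqrt {B g : Matrix d d ℂ} (hB : B.PosSemidef) (h : Commute B g) :
    Commute hB.sqrt g := by
  set U : Matrix d d ℂ := (hB.1.eigenvectorUnitary : Matrix d d ℂ) with hUdef
  have hU1 : U * star U = 1 := (Matrix.mem_unitaryGroup_iff).mp hB.1.eigenvectorUnitary.2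
  have hU2 : star U * U = 1 := (Matrix.mem_unitaryGroup_iff').mp hB.1.eigenvectorUnitary.2
  have cancel1 : ∀ Z : Matrix d d ℂ, star U * (U * Z) = Z := fun Z => by
    rw [← Matrix.mul_assoc, hU2, Matrix.one_mul]
  have cancel2 : ∀ Z : Matrix d d ℂ, U * (star U * Z) = Z := fun Z => by
    rw [← Matrix.mul_assoc, hU1, Matrix.one_mul]
  set dv : d → ℂ := Complex.ofReal ∘ hB.1.eigenvalues with hdv
  set sv : d → ℂ := Complex.ofReal ∘ Real.sqrt ∘ hB.1.eigenvalues with hsv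
  set G : Matrix d d ℂ := star U * g * U with hG
  have hBspec : B = U * diagonal dv * star U := hB.1.spectral_theorem
  have hDG : diagonal dv * G = G * diagonal dv := by
    have h' : (U * diagonal dv * star U) * g = g * (U * diagonal dv * star U) := by
      rw [← hBspec]; exact h
    have h2 := congrArg (fun M => star U * M * U) h'
    simp only [hG, Matrix.mul_assoc, cancel1, cancel2, hU1, hU2, Matrix.mul_one] at h2 ⊢
    exact h2
  have hentry : ∀ i j, dv i * G i j = G i j * dv j := by
    intro i j
    have := congrFun (congrFun hDG i) j
    simpa [Matrix.diagonal_mul, Matrix.mul_diagonal] using this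
  have hD'G : diagonal sv * G = G * diagonal sv := by
    ext i j
    simp only [Matrix.diagonal_mul, Matrix.mul_diagonal]
    by_cases hij : hB.1.eigenvalues i = hB.1.eigenvalues j
    · rw [hsv]; simp only [Function.comp_apply, hij]; ring
    · have hGij : G i j = 0 := by
        have h1 : dv i ≠ dv j := by
          simp only [hdv, Function.comp_apply, ne_eq, Complex.ofReal_inj]
          exact hij
        have h2 : (dv i - dv j) * G i j = 0 := by
          have := hentry i j
          ring_nf
          linear_combination this
        rcases mul_eq_zero.mp h2 with h3 | h3
        · exact absurd (sub_eq_zero.mp h3) h1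
        · exact h3
      simp [hGij]
  have hsqrt : hB.sqrt = U * diagonal sv * star U := rfl
  show hB.sqrt * g = g * hB.sqrt
  rw [hsqrt]
  calc U * diagonal sv * star U * g
      = U * (diagonal sv * G) * star U := by
        simp only [hG, Matrix.mul_assoc, cancel1, cancel2, hU1, hU2, Matrix.mul_one]
    _ = U * (G * diagonal sv) * star U := by rw [hD'G]
    _ = g * (U * diagonal sv * star U) := by
        simp only [hG, Matrix.mul_assoc, cancel1, cancel2, hU1, hU2, Matrix.mul_one]

/-- ordered product T 0 (v 0) * T 1 (v 1) * ⋯ -/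
noncomputable def stmt18_lamProd {n : ℕ} (T : Fin n → X → Matrix d d ℂ) (v : Fin n → X) :
    Matrix d d ℂ :=
  (List.ofFn fun i => T i (v i)).prod

omit [Fintype X] in
lemma stmt18_lamProd_zero (T : Fin 0 → X → Matrix d d ℂ) (v : Fin 0 → X) :
    stmt18_lamProd T v = 1 := by
  simp [stmt18_lamProd]

omit [Fintype X] in
lemma stmt18_lamProd_succ {n : ℕ} (T : Fin (n + 1) → X → Matrix d d ℂ) (x : X)
    (w : Fin n → X) :
    stmt18_lamProd T (Fin.cons x w) = T 0 x * stmt18_lamProd (fun i => T i.succ) w := by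
  simp [stmt18_lamProd, List.ofFn_succ]

lemma stmt18_collapse : ∀ {n : ℕ} (T : Fin n → X → Matrix d d ℂ)
    (C M : Matrix d d ℂ)
    (_hherm : ∀ i x, (T i x)ᴴ = T i x)
    (_hsum : ∀ i, ∑ x, T i x * T i x = 1)
    (_hC : ∀ i x, Commute (T i x) C),
    ∑ v : Fin n → X, ((stmt18_lamProd T v)ᴴ * M * stmt18_lamProd T v * C).trace
      = (M * C).trace := by
  intro n
  induction n with
  | zero =>
    intro T C M _ _ _
    rw [Fintype.sum_unique]
    simp [stmt18_lamProd_zero]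
  | succ n ih =>
    intro T C M hherm hsum hC
    rw [← (Fin.consEquiv fun _ : Fin (n+1) => X).sum_comp, Fintype.sum_prod_type]
    simp only [Fin.consEquiv, Equiv.coe_fn_mk]
    have step : ∀ x : X,
        ∑ w : Fin n → X,
          ((stmt18_lamProd T (Fin.cons x w))ᴴ * M * stmt18_lamProd T (Fin.cons x w) * C).trace
        = ((T 0 x)ᴴ * M * T 0 x * C).trace := by
      intro x
      have key : ∀ w : Fin n → X,
          (stmt18_lamProd T (Fin.cons x w))ᴴ * M * stmt18_lamProd T (Fin.cons x w) * C
          = (stmt18_lamProd (fun i => T i.succ) w)ᴴ * ((T 0 x)ᴴ * M * T 0 x) *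
              stmt18_lamProd (fun i => T i.succ) w * C := by
        intro w
        rw [stmt18_lamProd_succ]
        simp only [Matrix.conjTranspose_mul, Matrix.mul_assoc]
      calc ∑ w : Fin n → X,
            ((stmt18_lamProd T (Fin.cons x w))ᴴ * M * stmt18_lamProd T (Fin.cons x w) * C).trace
          = ∑ w : Fin n → X,
            ((stmt18_lamProd (fun i => T i.succ) w)ᴴ * ((T 0 x)ᴴ * M * T 0 x) *
              stmt18_lamProd (fun i => T i.succ) w * C).trace := by
            exact Finset.sum_congr rfl fun w _ => congrArg Matrix.trace (key w)
        _ = ((T 0 x)ᴴ * M * T 0 x * C).trace :=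
            ih (fun i => T i.succ) C ((T 0 x)ᴴ * M * T 0 x)
              (fun i y => hherm i.succ y) (fun i => hsum i.succ) (fun i y => hC i.succ y)
    rw [Finset.sum_congr rfl fun x _ => step x]
    have h2 : ∀ x : X, ((T 0 x)ᴴ * M * T 0 x * C).trace
        = (M * (C * (T 0 x * T 0 x))).trace := by
      intro x
      rw [hherm 0 x]
      rw [show T 0 x * M * T 0 x * C = T 0 x * (M * (T 0 x * C)) by
        simp only [Matrix.mul_assoc]]
      rw [Matrix.trace_mul_comm]
      rw [show M * (T 0 x * C) * T 0 x = M * (T 0 x * C * T 0 x) by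
        simp only [Matrix.mul_assoc]]
      rw [(hC 0 x).eq]
      simp only [Matrix.mul_assoc]
    rw [Finset.sum_congr rfl fun x _ => h2 x]
    rw [← Matrix.trace_sum]
    rw [show ∑ x, M * (C * (T 0 x * T 0 x)) = M * (C * (∑ x, T 0 x * T 0 x)) by
      rw [Finset.mul_sum, Finset.mul_sum]]
    rw [hsum 0, Matrix.mul_one]

lemma stmt18_extract [DecidableEq X] : ∀ {n : ℕ} (T : Fin n → X → Matrix d d ℂ)
    (C : Matrix d d ℂ)
    (_hherm : ∀ i x, (T i x)ᴴ = T i x)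
    (_hsum : ∀ i, ∑ x, T i x * T i x = 1)
    (_hC : ∀ i x, Commute (T i x) C) (j : Fin n) (x0 : X),
    ∑ v : Fin n → X, (if v j = x0 then (1:ℂ) else 0) *
        ((stmt18_lamProd T v)ᴴ * stmt18_lamProd T v * C).trace
      = (T j x0 * T j x0 * C).trace := by
  intro n
  induction n with
  | zero => intro T C _ _ _ j x0; exact j.elim0
  | succ n ih =>
    intro T C hherm hsum hC j x0
    rw [← (Fin.consEquiv fun _ : Fin (n+1) => X).sum_comp, Fintype.sum_prod_type]
    simp only [Fin.consEquiv, Equiv.coe_fn_mk]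
    have hconj : ∀ (x : X) (w : Fin n → X),
        (stmt18_lamProd T (Fin.cons x w))ᴴ * stmt18_lamProd T (Fin.cons x w) * C
        = (stmt18_lamProd (fun i => T i.succ) w)ᴴ * (T 0 x * T 0 x) *
            stmt18_lamProd (fun i => T i.succ) w * C := by
      intro x w
      rw [stmt18_lamProd_succ, Matrix.conjTranspose_mul, hherm 0 x]
      simp only [Matrix.mul_assoc]
    refine Fin.cases ?_ ?_ j
    · have inner : ∀ x : X,
          ∑ w : Fin n → X, (if (Fin.cons x w : Fin (n+1) → X) 0 = x0 then (1:ℂ) else 0) *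
            ((stmt18_lamProd T (Fin.cons x w))ᴴ * stmt18_lamProd T (Fin.cons x w) * C).trace
          = (if x = x0 then (1:ℂ) else 0) * (T 0 x * T 0 x * C).trace := by
        intro x
        simp only [Fin.cons_zero]
        rw [← Finset.mul_sum]
        congr 1
        rw [Finset.sum_congr rfl fun w _ => congrArg Matrix.trace (hconj x w)]
        exact stmt18_collapse (fun i => T i.succ) C (T 0 x * T 0 x)
          (fun i y => hherm i.succ y) (fun i => hsum i.succ) (fun i y => hC i.succ y)
      refine Eq.trans (Finset.sum_congr rfl fun x _ => inner x) ?_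
      simp [boole_mul, Finset.sum_ite_eq']
    · intro i
      have inner : ∀ w : Fin n → X,
          ∑ x : X, (if (Fin.cons x w : Fin (n+1) → X) i.succ = x0 then (1:ℂ) else 0) *
            ((stmt18_lamProd T (Fin.cons x w))ᴴ * stmt18_lamProd T (Fin.cons x w) * C).trace
          = (if w i = x0 then (1:ℂ) else 0) *
              ((stmt18_lamProd (fun i => T i.succ) w)ᴴ *
                stmt18_lamProd (fun i => T i.succ) w * C).trace := by
        intro w
        simp only [Fin.cons_succ]
        rw [← Finset.mul_sum]
        congr 1
        rw [Finset.sum_congr rfl fun x _ => congrArg Matrix.trace (hconj x w)]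
        rw [← Matrix.trace_sum]
        congr 1
        rw [show ∑ x : X, (stmt18_lamProd (fun i => T i.succ) w)ᴴ * (T 0 x * T 0 x) *
              stmt18_lamProd (fun i => T i.succ) w * C
            = (stmt18_lamProd (fun i => T i.succ) w)ᴴ * (∑ x : X, T 0 x * T 0 x) *
              stmt18_lamProd (fun i => T i.succ) w * C by
          simp only [Finset.mul_sum, Finset.sum_mul]]
        rw [hsum 0, Matrix.mul_one]
      rw [Finset.sum_comm]
      refine Eq.trans (Finset.sum_congr rfl fun w _ => inner w) ?_
      exact ih (fun i => T i.succ) C (fun i y => hherm i.succ y) (fun i => hsum i.succ)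
        (fun i y => hC i.succ y) i x0

end Stmt18Aux

/-- if the shared density operator γ on D ⊗ E commutes with all of
Alice's measurement operators R_a^x ⊗ I, then the correlation
p^{xy}_{ab} = Tr[γ (R_a^x ⊗ S_b^y)] is classical, i.e., a convex combination of
product distributions. -/
theorem stmt18 {D E A B X Y : Type*} [Fintype D] [DecidableEq D] [Fintype E] [DecidableEq E]
    [Fintype A] [Fintype B] [Fintype X] [Fintype Y]
    (γ : Matrix (D × E) (D × E) ℂ) (hγ : γ.PosSemidef) (htr : γ.trace = 1)
    (R : A → X → Matrix D D ℂ) (S : B → Y → Matrix E E ℂ)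
    (hR : ∀ a x, (R a x).PosSemidef) (hRsum : ∀ a, ∑ x, R a x = 1)
    (hS : ∀ b y, (S b y).PosSemidef) (hSsum : ∀ b, ∑ y, S b y = 1)
    (hcomm : ∀ a x, Commute (R a x ⊗ₖ (1 : Matrix E E ℂ)) γ) :
    ∃ (m : ℕ) (lam : Fin m → ℝ) (qv : A → Fin m → X → ℝ) (rv : B → Fin m → Y → ℝ),
      (∀ k, 0 ≤ lam k) ∧ (∑ k, lam k = 1) ∧
      (∀ a k x, 0 ≤ qv a k x) ∧ (∀ a k, ∑ x, qv a k x = 1) ∧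
      (∀ b k y, 0 ≤ rv b k y) ∧ (∀ b k, ∑ y, rv b k y = 1) ∧
      (∀ a b x y, ((R a x ⊗ₖ S b y) * γ).trace
        = ((∑ k, lam k * qv a k x * rv b k y : ℝ) : ℂ)) := by
  classical
  -- nonemptiness of E
  have hE : Nonempty E := by
    by_contra hne
    rw [not_nonempty_iff] at hne
    haveI : IsEmpty (D × E) := Prod.isEmpty_right
    rw [Matrix.trace, Finset.univ_eq_empty, Finset.sum_empty] at htr
    exact zero_ne_one htr
  obtain ⟨e0⟩ := hE
  set n := Fintype.card A with hn
  set eA : Fin n ≃ A := (Fintype.equivFin A).symm with heA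
  set Tm : Fin n → X → Matrix (D × E) (D × E) ℂ :=
    fun i x => (hR (eA i) x).sqrt ⊗ₖ (1 : Matrix E E ℂ) with hTm
  have hTherm : ∀ i x, (Tm i x)ᴴ = Tm i x := by
    intro i x
    show ((hR (eA i) x).sqrt ⊗ₖ (1 : Matrix E E ℂ))ᴴ = _
    rw [stmt18_kronCT, Matrix.conjTranspose_one, (hR (eA i) x).posSemidef_sqrt.1]
  have hTsq : ∀ i x, Tm i x * Tm i x = R (eA i) x ⊗ₖ (1 : Matrix E E ℂ) := by
    intro i x
    show ((hR (eA i) x).sqrt ⊗ₖ (1 : Matrix E E ℂ)) * ((hR (eA i) x).sqrt ⊗ₖ (1 : Matrix E E ℂ)) = _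
    rw [← Matrix.mul_kronecker_mul, (hR (eA i) x).sqrt_mul_self, Matrix.one_mul]
  have hTsum : ∀ i, ∑ x, Tm i x * Tm i x = 1 := by
    intro i
    rw [Finset.sum_congr rfl fun x _ => hTsq i x, ← stmt18_sumKron, hRsum,
      Matrix.one_kronecker_one]
  have hTγ : ∀ i x, Commute (Tm i x) γ := by
    intro i x
    have hps : (R (eA i) x ⊗ₖ (1 : Matrix E E ℂ)).PosSemidef :=
      stmt18_kronPSD (hR _ _) Matrix.PosSemidef.one
    have hTps : (Tm i x).PosSemidef :=
      stmt18_kronPSD (hR _ _).posSemidef_sqrt Matrix.PosSemidef.one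
    have hTeq : Tm i x = hps.sqrt := hTps.eq_sqrt_of_sq_eq hps (by rw [pow_two, hTsq])
    rw [hTeq]
    exact stmt18_commuteSqrt hps (hcomm (eA i) x)
  have hTS : ∀ i x (N : Matrix E E ℂ), Commute (Tm i x) ((1 : Matrix D D ℂ) ⊗ₖ N) := by
    intro i x N
    show Tm i x * _ = _ * Tm i x
    show ((hR (eA i) x).sqrt ⊗ₖ (1 : Matrix E E ℂ)) * ((1 : Matrix D D ℂ) ⊗ₖ N)
      = ((1 : Matrix D D ℂ) ⊗ₖ N) * ((hR (eA i) x).sqrt ⊗ₖ (1 : Matrix E E ℂ))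
    rw [← Matrix.mul_kronecker_mul, ← Matrix.mul_kronecker_mul, Matrix.mul_one, Matrix.one_mul,
      Matrix.mul_one, Matrix.one_mul]
  have hCby : ∀ (N : Matrix E E ℂ) i x, Commute (Tm i x) (γ * ((1 : Matrix D D ℂ) ⊗ₖ N)) :=
    fun N i x => (hTγ i x).mul_right (hTS i x N)
  set τ : (Fin n → X) → Matrix E E ℂ → ℂ := fun v N =>
    ((stmt18_lamProd Tm v)ᴴ * stmt18_lamProd Tm v * (γ * ((1 : Matrix D D ℂ) ⊗ₖ N))).trace
    with hτdef
  have hΛγ : ∀ v, Commute γ (stmt18_lamProd Tm v) := by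
    intro v
    apply Commute.list_prod_right
    intro xx hxx
    rw [List.mem_ofFn] at hxx
    obtain ⟨i, rfl⟩ := hxx
    exact (hTγ i (v i)).symm
  have hτnonneg : ∀ v (N : Matrix E E ℂ), N.PosSemidef → 0 ≤ τ v N := by
    intro v N hN
    have hre : (stmt18_lamProd Tm v)ᴴ * stmt18_lamProd Tm v * (γ * ((1 : Matrix D D ℂ) ⊗ₖ N))
        = ((stmt18_lamProd Tm v)ᴴ * γ * stmt18_lamProd Tm v) * ((1 : Matrix D D ℂ) ⊗ₖ N) := by
      have h1 : stmt18_lamProd Tm v * γ = γ * stmt18_lamProd Tm v := ((hΛγ v).symm).eq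
      calc (stmt18_lamProd Tm v)ᴴ * stmt18_lamProd Tm v * (γ * ((1 : Matrix D D ℂ) ⊗ₖ N))
          = (stmt18_lamProd Tm v)ᴴ * (stmt18_lamProd Tm v * γ) * ((1 : Matrix D D ℂ) ⊗ₖ N) := by
            simp only [Matrix.mul_assoc]
        _ = (stmt18_lamProd Tm v)ᴴ * (γ * stmt18_lamProd Tm v) * ((1 : Matrix D D ℂ) ⊗ₖ N) := by
            rw [h1]
        _ = ((stmt18_lamProd Tm v)ᴴ * γ * stmt18_lamProd Tm v) * ((1 : Matrix D D ℂ) ⊗ₖ N) := by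
            simp only [Matrix.mul_assoc]
    show 0 ≤ ((stmt18_lamProd Tm v)ᴴ * stmt18_lamProd Tm v *
      (γ * ((1 : Matrix D D ℂ) ⊗ₖ N))).trace
    rw [hre]
    exact stmt18_traceMulNonneg (hγ.conjTranspose_mul_mul_same _)
      (stmt18_kronPSD Matrix.PosSemidef.one hN)
  have hτre : ∀ v (N : Matrix E E ℂ), N.PosSemidef → τ v N = ((τ v N).re : ℂ) := by
    intro v N hN
    have h0 := Complex.nonneg_iff.mp (hτnonneg v N hN)
    exact Complex.ext (by simp) (by simp [← h0.2])
  have hτrenonneg : ∀ v (N : Matrix E E ℂ), N.PosSemidef → 0 ≤ (τ v N).re :=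
    fun v N hN => (Complex.nonneg_iff.mp (hτnonneg v N hN)).1
  have hτ1 : ∀ v, τ v 1 = ((stmt18_lamProd Tm v)ᴴ * 1 * stmt18_lamProd Tm v * γ).trace := by
    intro v
    show ((stmt18_lamProd Tm v)ᴴ * stmt18_lamProd Tm v *
      (γ * ((1 : Matrix D D ℂ) ⊗ₖ (1 : Matrix E E ℂ)))).trace = _
    rw [Matrix.one_kronecker_one, Matrix.mul_one, Matrix.mul_one, Matrix.mul_assoc]
  have hsum1 : ∑ v : Fin n → X, τ v 1 = 1 := by
    rw [Finset.sum_congr rfl fun v _ => hτ1 v]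
    rw [stmt18_collapse Tm γ 1 hTherm hTsum hTγ, Matrix.one_mul, htr]
  have hsumy : ∀ (b : B) (v : Fin n → X), ∑ y, τ v (S b y) = τ v 1 := by
    intro b v
    show ∑ y, ((stmt18_lamProd Tm v)ᴴ * stmt18_lamProd Tm v *
        (γ * ((1 : Matrix D D ℂ) ⊗ₖ S b y))).trace = _
    rw [← Matrix.trace_sum]
    show _ = ((stmt18_lamProd Tm v)ᴴ * stmt18_lamProd Tm v *
        (γ * ((1 : Matrix D D ℂ) ⊗ₖ (1 : Matrix E E ℂ)))).trace
    congr 1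
    rw [show ∑ y, (stmt18_lamProd Tm v)ᴴ * stmt18_lamProd Tm v *
          (γ * ((1 : Matrix D D ℂ) ⊗ₖ S b y))
        = (stmt18_lamProd Tm v)ᴴ * stmt18_lamProd Tm v *
          (γ * ((1 : Matrix D D ℂ) ⊗ₖ ∑ y, S b y)) by
      simp only [← Finset.mul_sum, stmt18_kronSum]]
    rw [hSsum b]
  set m := Fintype.card (Fin n → X) with hm
  set g : Fin m ≃ (Fin n → X) := (Fintype.equivFin (Fin n → X)).symm with hg
  refine ⟨m, fun k => (τ (g k) 1).re,
    fun a k x => if g k (eA.symm a) = x then 1 else 0,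
    fun b k y => if (τ (g k) 1).re = 0 then ((Fintype.card Y : ℝ))⁻¹
      else (τ (g k) (S b y)).re / (τ (g k) 1).re, ?_, ?_, ?_, ?_, ?_, ?_, ?_⟩
  · exact fun k => hτrenonneg _ _ Matrix.PosSemidef.one
  · rw [show ∑ k : Fin m, (τ (g k) 1).re = (∑ k : Fin m, τ (g k) 1).re from
      (Complex.re_sum _ _).symm]
    rw [g.sum_comp (fun v => τ v 1), hsum1, Complex.one_re]
  · intro a k x
    dsimp only
    split <;> norm_num
  · intro a k
    dsimp only
    simp [Finset.sum_ite_eq]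
  · intro b k y
    dsimp only
    split
    · positivity
    · exact div_nonneg (hτrenonneg _ _ (hS b y)) (hτrenonneg _ _ Matrix.PosSemidef.one)
  · intro b k
    dsimp only
    haveI : Nonempty Y := by
      by_contra hY
      rw [not_nonempty_iff] at hY
      have h1 := hSsum b
      rw [Finset.univ_eq_empty, Finset.sum_empty] at h1
      have h2 := congrFun (congrFun h1 e0) e0
      simp [Matrix.one_apply_eq] at h2
    by_cases h0 : (τ (g k) 1).re = 0
    · simp only [h0, if_pos rfl, if_true]
      rw [Finset.sum_const, Finset.card_univ, nsmul_eq_mul]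
      exact mul_inv_cancel₀ (Nat.cast_ne_zero.mpr Fintype.card_ne_zero)
    · simp only [h0, if_neg h0, if_false]
      rw [← Finset.sum_div]
      rw [show ∑ y, (τ (g k) (S b y)).re = (τ (g k) 1).re by
        rw [← Complex.re_sum, hsumy b (g k)]]
      exact div_self h0
  · intro a b x y
    set j := eA.symm a with hj
    have hzero : ∀ k : Fin m, (τ (g k) 1).re = 0 → (τ (g k) (S b y)).re = 0 := by
      intro k h0
      have hs : ∑ y', (τ (g k) (S b y')).re = 0 := by
        rw [← Complex.re_sum, hsumy b (g k)]; exact h0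
      exact (Finset.sum_eq_zero_iff_of_nonneg
        (fun y' _ => hτrenonneg (g k) _ (hS b y'))).mp hs y (Finset.mem_univ y)
    have hk : ∀ k : Fin m,
        (τ (g k) 1).re * (if g k j = x then (1:ℝ) else 0) *
          (if (τ (g k) 1).re = 0 then ((Fintype.card Y : ℝ))⁻¹
            else (τ (g k) (S b y)).re / (τ (g k) 1).re)
        = (if g k j = x then (1:ℝ) else 0) * (τ (g k) (S b y)).re := by
      intro k
      by_cases h0 : (τ (g k) 1).re = 0
      · rw [if_pos h0, h0, hzero k h0]; ring
      · rw [if_neg h0]; field_simp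
    have hstep2 : ∀ k : Fin m,
        (if g k j = x then (1:ℝ) else 0) * (τ (g k) (S b y)).re
        = ((if g k j = x then (1:ℂ) else 0) * τ (g k) (S b y)).re := by
      intro k
      by_cases h : g k j = x <;> simp [h]
    have hEx := stmt18_extract Tm (γ * ((1 : Matrix D D ℂ) ⊗ₖ S b y)) hTherm hTsum
      (hCby (S b y)) j x
    have hre : ∑ k : Fin m, (τ (g k) 1).re * (if g k j = x then (1:ℝ) else 0) *
          (if (τ (g k) 1).re = 0 then ((Fintype.card Y : ℝ))⁻¹
            else (τ (g k) (S b y)).re / (τ (g k) 1).re)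
        = (Tm j x * Tm j x * (γ * ((1 : Matrix D D ℂ) ⊗ₖ S b y))).trace.re := by
      rw [Finset.sum_congr rfl fun k _ => hk k]
      rw [Finset.sum_congr rfl fun k _ => hstep2 k]
      rw [← Complex.re_sum]
      congr 1
      rw [g.sum_comp (fun v => (if v j = x then (1:ℂ) else 0) * τ v (S b y))]
      exact hEx
    have hTj : Tm j x * Tm j x = R a x ⊗ₖ (1 : Matrix E E ℂ) := by
      rw [hTsq, eA.apply_symm_apply]
    have hLC : (Tm j x * Tm j x * (γ * ((1 : Matrix D D ℂ) ⊗ₖ S b y))).trace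
        = ((R a x ⊗ₖ S b y) * γ).trace := by
      rw [hTj]
      calc ((R a x ⊗ₖ (1 : Matrix E E ℂ)) * (γ * ((1 : Matrix D D ℂ) ⊗ₖ S b y))).trace
          = ((R a x ⊗ₖ (1 : Matrix E E ℂ)) * γ * ((1 : Matrix D D ℂ) ⊗ₖ S b y)).trace := by
            rw [Matrix.mul_assoc]
        _ = (γ * (R a x ⊗ₖ (1 : Matrix E E ℂ)) * ((1 : Matrix D D ℂ) ⊗ₖ S b y)).trace := by
            rw [(hcomm a x).eq]
        _ = (γ * ((R a x ⊗ₖ (1 : Matrix E E ℂ)) * ((1 : Matrix D D ℂ) ⊗ₖ S b y))).trace := by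
            rw [Matrix.mul_assoc]
        _ = (γ * (R a x ⊗ₖ S b y)).trace := by
            rw [← Matrix.mul_kronecker_mul, Matrix.mul_one, Matrix.one_mul]
        _ = ((R a x ⊗ₖ S b y) * γ).trace := Matrix.trace_mul_comm _ _
    have hnn : 0 ≤ ((R a x ⊗ₖ S b y) * γ).trace :=
      stmt18_traceMulNonneg (stmt18_kronPSD (hR a x) (hS b y)) hγ
    have h0 := Complex.nonneg_iff.mp hnn
    have hfin : ((R a x ⊗ₖ S b y) * γ).trace = (((R a x ⊗ₖ S b y) * γ).trace.re : ℂ) :=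
      Complex.ext (by simp) (by simp [← h0.2])
    rw [hfin]
    refine congrArg Complex.ofReal ?_
    dsimp only
    rw [hre, hLC]
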